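/- Let 𝔐 be the set of circuits of a loopless matroid without parallel elements on S and let 𝔐̄ be its Gröbner circuits. In the exterior algebra E over R on generators e_s (s ∈ S), the elements ∂e_J := Σ_{ν=1}^{#J} (−1)^{ν−1} e_{J∖{j_ν}} for J ∈ 𝔐 ∩ 𝔐̄ generate the same ideal as the elements ∂e_J for all J ∈ 𝔐 (the defining ideal of the Orlik–Solomon algebra). -/

import Mathlib

/-- A circuit of a matroid: a minimal dependent set. -/
def IsCircuit {S : Type*} (M : Matroid S) (C : Finset S) : Prop :=
  M.Dep ↑C ∧ ∀ D : Finset S, D ⊂ C → ¬ M.Dep ↑D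

/-- Strict degree-lexicographic order on finsets. -/
def dlexLT {S : Type*} [LinearOrder S] (K J : Finset S) : Prop :=
  K.card < J.card ∨ (K.card = J.card ∧ ∃ m ∈ K, m ∉ J ∧ ∀ x ∈ J, x ∉ K → m < x)

/-- `K ⊑ J`: `K` is a convex subset of `J`. -/
def convexIn {S : Type*} [LinearOrder S] (K J : Finset S) : Prop :=
  K ⊆ J ∧ ∀ j ∈ J, (∃ k ∈ K, k < j) → (∃ k' ∈ K, j < k') → j ∈ K

/-- `J` with its least element removed. -/
def eraseMin {S : Type*} [LinearOrder S] (J : Finset S) : Finset S :=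
  J.filter fun x => ∃ y ∈ J, y < x

/-- The defining fixpoint property of the set of Gröbner circuits `𝔐̄`. -/
def IsGroebnerCircuitSet {S : Type*} [LinearOrder S] (M : Matroid S)
    (Mbar : Set (Finset S)) : Prop :=
  ∀ J : Finset S, J ∈ Mbar ↔
    (M.Dep ↑J ∧ ∀ K ∈ Mbar, dlexLT K J → ¬ convexIn (eraseMin K) (eraseMin J))

/-- The monomial `e_J = e_{j_1} ∧ ⋯ ∧ e_{j_{#J}}` in the exterior algebra on the free
module `S →₀ R`. -/
noncomputable def eMon (R : Type*) [CommRing R] {S : Type*} [LinearOrder S] (J : Finset S) :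
    ExteriorAlgebra R (S →₀ R) :=
  ((J.sort (· ≤ ·)).map fun s => ExteriorAlgebra.ι R (Finsupp.single s (1 : R))).prod

/-- `∂e_J = Σ_ν (-1)^{ν-1} e_{J ∖ {j_ν}}`. -/
noncomputable def bnd (R : Type*) [CommRing R] {S : Type*} [LinearOrder S] (J : Finset S) :
    ExteriorAlgebra R (S →₀ R) :=
  ∑ j ∈ J, ((-1 : R) ^ (J.filter (· < j)).card) • eMon R (J.erase j)

set_option linter.unusedSectionVars false
set_option maxHeartbeats 1000000

section EA
variable {S : Type*} [LinearOrder S] (R : Type*) [CommRing R]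

noncomputable def ιe (s : S) : ExteriorAlgebra R (S →₀ R) :=
  ExteriorAlgebra.ι R (Finsupp.single s (1 : R))

noncomputable def xlp (ℓ : List S) : ExteriorAlgebra R (S →₀ R) := (ℓ.map (ιe R)).prod

noncomputable def DD : ExteriorAlgebra R (S →₀ R) →ₗ[R] ExteriorAlgebra R (S →₀ R) :=
  CliffordAlgebra.contractLeft (Finsupp.linearCombination R (fun _ : S => (1 : R)))

variable {R}

lemma lp_nil : xlp R ([] : List S) = 1 := rfl

lemma lp_cons (a : S) (ℓ : List S) : xlp R (a :: ℓ) = ιe R a * xlp R ℓ := by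
  simp [xlp]

lemma lp_append (ℓ₁ ℓ₂ : List S) : xlp R (ℓ₁ ++ ℓ₂) = xlp R ℓ₁ * xlp R ℓ₂ := by
  simp [xlp]

lemma eMon_eq_lp (J : Finset S) : eMon R J = xlp R (J.sort (· ≤ ·)) := rfl

lemma DD_ιe_mul (a : S) (x : ExteriorAlgebra R (S →₀ R)) :
    DD R (ιe R a * x) = x - ιe R a * DD R x := by
  show CliffordAlgebra.contractLeft _ (CliffordAlgebra.ι _ _ * x) = _
  rw [CliffordAlgebra.contractLeft_ι_mul]
  simp [ιe, DD]

lemma DD_one : DD R (1 : ExteriorAlgebra R (S →₀ R)) = 0 :=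
  CliffordAlgebra.contractLeft_one _ _

lemma DD_DD (x : ExteriorAlgebra R (S →₀ R)) : DD R (DD R x) = 0 :=
  CliffordAlgebra.contractLeft_contractLeft _ x

lemma ιe_anticomm (a b : S) : ιe R a * ιe R b = -(ιe R b * ιe R a) := by
  have h := ExteriorAlgebra.ι_sq_zero (R := R)
    (Finsupp.single a (1 : R) + Finsupp.single b (1 : R))
  rw [map_add] at h
  have := ExteriorAlgebra.ι_sq_zero (R := R) (Finsupp.single a (1 : R))
  have := ExteriorAlgebra.ι_sq_zero (R := R) (Finsupp.single b (1 : R))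
  rw [mul_add, add_mul, add_mul] at h
  unfold ιe
  linear_combination (norm := noncomm_ring) h - this -
    ExteriorAlgebra.ι_sq_zero (R := R) (Finsupp.single a (1 : R))

lemma ιe_sq (a : S) : ιe R a * ιe R a = 0 := ExteriorAlgebra.ι_sq_zero _

lemma ιe_mul_lp_of_mem {a : S} {ℓ : List S} (h : a ∈ ℓ) : ιe R a * xlp R ℓ = 0 := by
  induction ℓ with
  | nil => simp at h
  | cons b t ih =>
    rcases List.mem_cons.mp h with rfl | h
    · rw [lp_cons, ← mul_assoc, ιe_sq, zero_mul]
    · rw [lp_cons, ← mul_assoc, ιe_anticomm, neg_mul, mul_assoc, ih h, mul_zero, neg_zero]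

lemma lp_eq_zero_of_not_nodup {ℓ : List S} (h : ¬ ℓ.Nodup) : xlp R ℓ = 0 := by
  induction ℓ with
  | nil => simp at h
  | cons b t ih =>
    rw [List.nodup_cons, not_and_or] at h
    rcases h with h | h
    · rw [lp_cons, ιe_mul_lp_of_mem (not_not.mp h)]
    · rw [lp_cons, ih h, mul_zero]

lemma DD_leibniz (x y : ExteriorAlgebra R (S →₀ R)) :
    DD R (x * y) = DD R x * y + CliffordAlgebra.involute x * DD R y := by
  simp only [DD]
  induction x using CliffordAlgebra.induction generalizing y with
  | algebraMap r =>
    rw [CliffordAlgebra.contractLeft_algebraMap, zero_mul, zero_add, AlgHom.commutes,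
      ← Algebra.smul_def, ← Algebra.smul_def, map_smul]
  | ι m =>
    rw [CliffordAlgebra.contractLeft_ι_mul, CliffordAlgebra.involute_ι,
      CliffordAlgebra.contractLeft_ι, ← Algebra.smul_def, neg_mul, sub_eq_add_neg]
  | mul a b ha hb =>
    rw [mul_assoc, ha, hb, ha b, map_mul]
    noncomm_ring
  | add a b ha hb =>
    rw [add_mul, map_add, map_add, map_add, add_mul, add_mul, ha, hb]
    abel

lemma involute_ιe (a : S) : CliffordAlgebra.involute (ιe R a) = -(ιe R a) :=
  CliffordAlgebra.involute_ι _

lemma involute_xlp (ℓ : List S) :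
    CliffordAlgebra.involute (xlp R ℓ) = ((-1 : R) ^ ℓ.length) • xlp R ℓ := by
  induction ℓ with
  | nil => simp [lp_nil]
  | cons a t ih =>
    rw [lp_cons, map_mul, ih, involute_ιe, List.length_cons, pow_succ, neg_mul, mul_smul_comm,
      ← neg_smul, mul_neg_one]

lemma involute_eMon (J : Finset S) :
    CliffordAlgebra.involute (eMon R J) = ((-1 : R) ^ J.card) • eMon R J := by
  rw [eMon_eq_lp, involute_xlp, Finset.length_sort]

lemma involute_bnd (K : Finset S) :
    CliffordAlgebra.involute (bnd R K) = ((-1 : R) ^ (K.card - 1)) • bnd R K := by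
  unfold bnd
  rw [map_sum, Finset.smul_sum]
  refine Finset.sum_congr rfl fun j hj => ?_
  rw [map_smul, involute_eMon, Finset.card_erase_of_mem hj, smul_comm]

/-- A sorted nodup list is the sort of its `toFinset`. -/
lemma sort_eq_of_sorted {ℓ : List S} {F : Finset S} (hn : ℓ.Nodup)
    (hs : ℓ.Pairwise (· ≤ ·)) (hf : ℓ.toFinset = F) : F.sort (· ≤ ·) = ℓ := by
  refine List.Perm.eq_of_pairwise' (Finset.pairwise_sort _ _) hs ?_
  refine List.perm_of_nodup_nodup_toFinset_eq (Finset.sort_nodup _ _) hn ?_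
  rw [Finset.sort_toFinset, hf]

lemma sort_min_cons {J : Finset S} (h : J.Nonempty) :
    J.sort (· ≤ ·) = J.min' h :: ((J.erase (J.min' h)).sort (· ≤ ·)) := by
  refine sort_eq_of_sorted ?_ ?_ ?_
  · rw [List.nodup_cons]
    exact ⟨by simp, Finset.sort_nodup _ _⟩
  · rw [List.pairwise_cons]
    refine ⟨fun b hb => ?_, Finset.pairwise_sort _ _⟩
    rw [Finset.mem_sort] at hb
    exact J.min'_le _ (Finset.mem_of_mem_erase hb)
  · rw [List.toFinset_cons, Finset.sort_toFinset, Finset.insert_erase (J.min'_mem h)]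

lemma eMon_min {J : Finset S} (h : J.Nonempty) :
    eMon R J = ιe R (J.min' h) * eMon R (J.erase (J.min' h)) := by
  rw [eMon_eq_lp, sort_min_cons h, lp_cons, eMon_eq_lp]

lemma eraseMin_eq {J : Finset S} (h : J.Nonempty) :
    (J.filter fun x => ∃ y ∈ J, y < x) = J.erase (J.min' h) := by
  ext x
  simp only [Finset.mem_filter, Finset.mem_erase]
  constructor
  · rintro ⟨hx, y, hy, hyx⟩
    exact ⟨fun hxm => absurd (hxm ▸ hyx) (not_lt.mpr (J.min'_le _ hy)), hx⟩
  · rintro ⟨hne, hx⟩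
    exact ⟨hx, J.min' h, J.min'_mem h, lt_of_le_of_ne (J.min'_le _ hx) (Ne.symm hne)⟩

lemma DD_eMon (J : Finset S) : DD R (eMon R J) = bnd R J := by
  induction J using Finset.strongInduction with
  | _ J ih =>
    rcases J.eq_empty_or_nonempty with rfl | h
    · rw [show eMon R (∅ : Finset S) = 1 by simp [eMon], DD_one]
      simp [bnd]
    · set a := J.min' h with ha
      have haJ : a ∈ J := J.min'_mem h
      rw [eMon_min h, DD_ιe_mul, ih _ (Finset.erase_ssubset haJ)]
      conv_rhs => rw [bnd, ← Finset.add_sum_erase _ _ haJ]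
      have h1 : (J.filter (· < a)).card = 0 := by
        rw [Finset.card_eq_zero, Finset.filter_eq_empty_iff]
        exact fun x hx => not_lt.mpr (J.min'_le _ hx)
      rw [h1, pow_zero, one_smul]
      have h2 : ∀ j ∈ J.erase a,
          ((-1 : R) ^ (J.filter (· < j)).card) • eMon R (J.erase j)
            = -(((-1 : R) ^ ((J.erase a).filter (· < j)).card) •
                (ιe R a * eMon R ((J.erase a).erase j))) := by
        intro j hj
        obtain ⟨hja, hjJ⟩ := Finset.mem_erase.mp hj
        have haj : a < j := lt_of_le_of_ne (J.min'_le _ hjJ) (Ne.symm hja)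
        have hmin : a = (J.erase j).min' ⟨a, Finset.mem_erase.mpr ⟨fun e => hja e.symm, haJ⟩⟩ := by
          refine le_antisymm ?_ (Finset.min'_le _ _ (Finset.mem_erase.mpr ⟨fun e => hja e.symm, haJ⟩))
          refine Finset.le_min' _ _ _ fun y hy => J.min'_le _ (Finset.mem_of_mem_erase hy)
        have : eMon R (J.erase j) = ιe R a * eMon R ((J.erase j).erase a) := by
          rw [eMon_min ⟨a, Finset.mem_erase.mpr ⟨fun e => hja e.symm, haJ⟩⟩, ← hmin]
        rw [this, Finset.erase_right_comm]
        have hcard : (J.filter (· < j)).card = ((J.erase a).filter (· < j)).card + 1 := by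
          have : J.filter (· < j) = insert a ((J.erase a).filter (· < j)) := by
            ext x
            simp only [Finset.mem_filter, Finset.mem_insert, Finset.mem_erase]
            constructor
            · rintro ⟨hx, hxj⟩
              by_cases hxa : x = a
              · exact Or.inl hxa
              · exact Or.inr ⟨⟨hxa, hx⟩, hxj⟩
            · rintro (rfl | ⟨⟨_, hx⟩, hxj⟩)
              · exact ⟨haJ, haj⟩
              · exact ⟨hx, hxj⟩
          rw [this, Finset.card_insert_of_notMem (by simp)]
        rw [hcard, pow_succ, mul_neg_one, neg_smul, ← smul_neg]
      rw [Finset.sum_congr rfl h2, Finset.sum_neg_distrib, bnd, Finset.mul_sum]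
      simp only [mul_smul_comm]
      abel

lemma ιe_mul_eMon_of_mem {a : S} {F : Finset S} (h : a ∈ F) : ιe R a * eMon R F = 0 :=
  ιe_mul_lp_of_mem ((Finset.mem_sort _).mpr h)

lemma sort_insert_of_le {a : S} {F : Finset S} (ha : a ∉ F) (hle : ∀ x ∈ F, a ≤ x) :
    (insert a F).sort (· ≤ ·) = a :: F.sort (· ≤ ·) := by
  refine sort_eq_of_sorted ?_ ?_ ?_
  · rw [List.nodup_cons]
    exact ⟨fun hc => ha ((Finset.mem_sort _).mp hc), Finset.sort_nodup _ _⟩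
  · rw [List.pairwise_cons]
    exact ⟨fun b hb => hle b ((Finset.mem_sort _).mp hb), Finset.pairwise_sort _ _⟩
  · rw [List.toFinset_cons, Finset.sort_toFinset]

lemma eMon_insert_of_le {a : S} {F : Finset S} (ha : a ∉ F) (hle : ∀ x ∈ F, a ≤ x) :
    eMon R (insert a F) = ιe R a * eMon R F := by
  rw [eMon_eq_lp, sort_insert_of_le ha hle, lp_cons, eMon_eq_lp]

lemma ιe_mul_eMon_insert {a : S} {F : Finset S} (ha : a ∉ F) :
    ∃ ε : R, (ε = 1 ∨ ε = -1) ∧ ιe R a * eMon R F = ε • eMon R (insert a F) := by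
  induction F using Finset.strongInduction generalizing a with
  | _ F ih =>
    rcases F.eq_empty_or_nonempty with rfl | h
    · exact ⟨1, Or.inl rfl, by rw [eMon_insert_of_le ha (by simp), one_smul]⟩
    · set b := F.min' h with hb
      have hbF : b ∈ F := F.min'_mem h
      have hab : a ≠ b := fun e => ha (e ▸ hbF)
      rcases lt_or_gt_of_ne hab with hlt | hgt
      · exact ⟨1, Or.inl rfl,
          by rw [eMon_insert_of_le ha (fun x hx => (le_of_lt (lt_of_lt_of_le hlt (F.min'_le x hx)))), one_smul]⟩
      · -- b < a
        have haFb : a ∉ F.erase b := fun hc => ha (Finset.mem_of_mem_erase hc)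
        obtain ⟨ε, hε, heq⟩ := ih (F.erase b) (Finset.erase_ssubset hbF) haFb
        have hbot : b ∉ insert a (F.erase b) := by
          simp only [Finset.mem_insert, Finset.mem_erase]
          rintro (rfl | ⟨hne, _⟩)
          · exact absurd hgt (lt_irrefl _)
          · exact hne rfl
        have hble : ∀ x ∈ insert a (F.erase b), b ≤ x := by
          intro x hx
          rcases Finset.mem_insert.mp hx with rfl | hx
          · exact le_of_lt hgt
          · exact F.min'_le x (Finset.mem_of_mem_erase hx)
        refine ⟨-ε, hε.symm.imp (fun e => by rw [e, neg_neg]) (fun e => by rw [e]), ?_⟩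
        rw [eMon_min h, ← hb, ← mul_assoc, ιe_anticomm, neg_mul, mul_assoc, heq,
          mul_smul_comm, ← eMon_insert_of_le hbot hble]
        have hset : insert b (insert a (F.erase b)) = insert a F := by
          rw [Finset.insert_comm, Finset.insert_erase hbF]
        rw [hset, ← neg_smul]

lemma xlp_nodup {ℓ : List S} (h : ℓ.Nodup) :
    ∃ ε : R, (ε = 1 ∨ ε = -1) ∧ xlp R ℓ = ε • eMon R ℓ.toFinset := by
  induction ℓ with
  | nil => exact ⟨1, Or.inl rfl, by simp [lp_nil, eMon]⟩
  | cons a t ih =>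
    rw [List.nodup_cons] at h
    obtain ⟨ε, hε, heq⟩ := ih h.2
    have hat : a ∉ t.toFinset := fun hc => h.1 (List.mem_toFinset.mp hc)
    obtain ⟨δ, hδ, heq2⟩ := ιe_mul_eMon_insert (R := R) hat
    refine ⟨ε * δ, ?_, ?_⟩
    · rcases hε with rfl | rfl <;> rcases hδ with rfl | rfl <;> simp
    · rw [lp_cons, heq, mul_smul_comm, heq2, smul_smul, List.toFinset_cons]

lemma ιe_min_mul_bnd {J : Finset S} (h : J.Nonempty) :
    ιe R (J.min' h) * bnd R J = eMon R J := by
  set a := J.min' h with ha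
  rw [bnd, Finset.mul_sum]
  rw [Finset.sum_eq_single a]
  · have h1 : (J.filter (· < a)).card = 0 := by
      rw [Finset.card_eq_zero, Finset.filter_eq_empty_iff]
      exact fun x hx => not_lt.mpr (J.min'_le _ hx)
    rw [h1, pow_zero, one_smul, ← eMon_min h]
  · intro j hj hja
    rw [mul_smul_comm, ιe_mul_eMon_of_mem (Finset.mem_erase.mpr ⟨Ne.symm hja, J.min'_mem h⟩),
      smul_zero]
  · intro hc
    exact absurd (J.min'_mem h) hc

end EA

section MatroidLemmas

variable {S : Type*} [DecidableEq S] {M : Matroid S} (hE : M.E = Set.univ)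

include hE

lemma subset_ground' (X : Set S) : X ⊆ M.E := hE ▸ Set.subset_univ _

lemma indep_of_not_dep {X : Finset S} (h : ¬ M.Dep ↑X) : M.Indep ↑X :=
  (M.not_dep_iff (subset_ground' hE _)).mp h

lemma dep_of_not_indep {X : Finset S} (h : ¬ M.Indep ↑X) : M.Dep ↑X :=
  (M.not_indep_iff (subset_ground' hE _)).mp h

lemma indep_of_ssubset_circuit {C D : Finset S} (hC : IsCircuit M C) (h : D ⊂ C) :
    M.Indep ↑D := indep_of_not_dep hE (hC.2 D h)

lemma dep_contains_circuit {J : Finset S} (hJ : M.Dep ↑J) : ∃ C, C ⊆ J ∧ IsCircuit M C := by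
  induction J using Finset.strongInduction with
  | _ J ih =>
    by_cases h : ∀ D : Finset S, D ⊂ J → ¬ M.Dep ↑D
    · exact ⟨J, subset_rfl, hJ, h⟩
    · push_neg at h
      obtain ⟨D, hDJ, hD⟩ := h
      obtain ⟨C, hCD, hC⟩ := ih D hDJ hD
      exact ⟨C, hCD.trans hDJ.subset, hC⟩

lemma circuit_elimination {C₁ C₂ : Finset S} {e : S} (h1 : IsCircuit M C₁)
    (h2 : IsCircuit M C₂) (hne : C₁ ≠ C₂) (he1 : e ∈ C₁) (he2 : e ∈ C₂) :
    M.Dep ↑((C₁ ∪ C₂).erase e) := by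
  classical
  by_contra hX
  have hX : M.Indep ↑((C₁ ∪ C₂).erase e) := indep_of_not_dep hE hX
  -- pick f ∈ C₂ \ C₁
  have hf : ∃ f, f ∈ C₂ ∧ f ∉ C₁ := by
    by_contra hc
    push_neg at hc
    have hsub : C₂ ⊆ C₁ := hc
    rcases eq_or_ssubset_of_subset hsub with rfl | hss
    · exact hne rfl
    · exact (Matroid.dep_iff.mp h2.1).1 (indep_of_ssubset_circuit hE h1 hss)
  obtain ⟨f, hfC₂, hfC₁⟩ := hf
  set U : Finset S := (C₁ ∪ C₂).erase f with hU
  set T : Finset (Finset S) :=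
    U.powerset.filter (fun I => C₂.erase f ⊆ I ∧ M.Indep ↑I) with hT
  have hTne : (C₂.erase f) ∈ T := by
    refine Finset.mem_filter.mpr ⟨Finset.mem_powerset.mpr ?_, subset_rfl, ?_⟩
    · exact Finset.erase_subset_erase _ (Finset.subset_union_right)
    · exact indep_of_ssubset_circuit hE h2 (Finset.erase_ssubset hfC₂)
  obtain ⟨I, hIT, hImax⟩ := T.exists_max_image Finset.card ⟨_, hTne⟩
  have hIU : I ⊆ U := Finset.mem_powerset.mp (Finset.mem_filter.mp hIT).1
  have hIC₂ : C₂.erase f ⊆ I := (Finset.mem_filter.mp hIT).2.1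
  have hIindep : M.Indep ↑I := (Finset.mem_filter.mp hIT).2.2
  -- I misses some g ∈ C₁
  have hg : ∃ g, g ∈ C₁ ∧ g ∉ I := by
    by_contra hc
    push_neg at hc
    exact (Matroid.dep_iff.mp h1.1).1 (hIindep.subset (fun x hx => hc x hx))
  obtain ⟨g, hgC₁, hgI⟩ := hg
  have hgf : g ≠ f := fun h => hfC₁ (h ▸ hgC₁)
  have heCC : e ∈ C₁ ∪ C₂ := Finset.mem_union_left _ he1
  have hfCC : f ∈ C₁ ∪ C₂ := Finset.mem_union_right _ hfC₂
  have hgU : g ∈ U := Finset.mem_erase.mpr ⟨hgf, Finset.mem_union_left _ hgC₁⟩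
  have hcardI : I.card < ((C₁ ∪ C₂).erase e).card := by
    have h1' : I ⊆ U.erase g := by
      intro x hx
      exact Finset.mem_erase.mpr ⟨fun h => hgI (h ▸ hx), hIU hx⟩
    calc I.card ≤ (U.erase g).card := Finset.card_le_card h1'
    _ = (C₁ ∪ C₂).card - 1 - 1 := by
        rw [Finset.card_erase_of_mem hgU, hU, Finset.card_erase_of_mem hfCC]
    _ < (C₁ ∪ C₂).card - 1 := by
        have h2c : 2 ≤ (C₁ ∪ C₂).card := by
          have : ({e, f} : Finset S) ⊆ C₁ ∪ C₂ := by
            intro x hx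
            rcases Finset.mem_insert.mp hx with rfl | hx
            · exact heCC
            · rw [Finset.mem_singleton.mp hx]; exact hfCC
          have hef : e ≠ f := fun h => hfC₁ (h ▸ he1)
          calc 2 = ({e, f} : Finset S).card := by
                rw [Finset.card_insert_of_notMem (by simp [hef]), Finset.card_singleton]
          _ ≤ (C₁ ∪ C₂).card := Finset.card_le_card this
        omega
    _ = ((C₁ ∪ C₂).erase e).card := (Finset.card_erase_of_mem heCC).symm
  -- augment
  obtain ⟨x, hx, hxindep⟩ := hIindep.augment hX (by
    rw [Set.encard_coe_eq_coe_finsetCard, Set.encard_coe_eq_coe_finsetCard]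
    exact_mod_cast hcardI)
  obtain ⟨hxX, hxI⟩ := hx
  rw [← Finset.coe_insert] at hxindep
  have hxCC := Finset.mem_of_mem_erase (by exact_mod_cast hxX)
  by_cases hxf : x = f
  · refine (Matroid.dep_iff.mp h2.1).1 (hxindep.subset ?_)
    have : C₂ ⊆ insert x I := by
      intro y hy
      by_cases hyf : y = f
      · rw [hyf, ← hxf]; exact Finset.mem_insert_self _ _
      · exact Finset.mem_insert_of_mem (hIC₂ (Finset.mem_erase.mpr ⟨hyf, hy⟩))
    exact_mod_cast Finset.coe_subset.mpr this
  · have hmem : insert x I ∈ T := by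
      refine Finset.mem_filter.mpr ⟨Finset.mem_powerset.mpr ?_, hIC₂.trans (Finset.subset_insert _ _), hxindep⟩
      intro y hy
      rcases Finset.mem_insert.mp hy with rfl | hy
      · exact Finset.mem_erase.mpr ⟨hxf, hxCC⟩
      · exact hIU hy
    have := hImax _ hmem
    rw [Finset.card_insert_of_notMem (by exact_mod_cast hxI)] at this
    omega

end MatroidLemmas

section Dlex

variable {S : Type*} [LinearOrder S]

lemma dlexLT_irrefl (J : Finset S) : ¬ dlexLT J J := by
  rintro (h | ⟨-, m, hm, hm', -⟩)
  · exact lt_irrefl _ h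
  · exact hm' hm

lemma dlexLT_trans {K J L : Finset S} (h1 : dlexLT K J) (h2 : dlexLT J L) : dlexLT K L := by
  rcases h1 with h1 | ⟨hc1, a, haK, haJ, ha⟩
  · rcases h2 with h2 | ⟨hc2, _⟩
    · exact Or.inl (h1.trans h2)
    · exact Or.inl (hc2 ▸ h1)
  · rcases h2 with h2 | ⟨hc2, b, hbJ, hbL, hb⟩
    · exact Or.inl (hc1 ▸ h2)
    · refine Or.inr ⟨hc1.trans hc2, ?_⟩
      rcases lt_trichotomy a b with hab | rfl | hba
      · -- a works
        refine ⟨a, haK, fun haL => ?_, fun x hxL hxK => ?_⟩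
        · exact absurd hab (not_lt.mpr (le_of_lt (hb a haL haJ)))
        · by_cases hxJ : x ∈ J
          · exact ha x hxJ hxK
          · exact hab.trans (hb x hxL hxJ)
      · exact absurd hbJ haJ
      · -- b works
        have hbK : b ∈ K := by
          by_contra hbK
          exact absurd hba (not_lt.mpr (le_of_lt (ha b hbJ hbK)))
        refine ⟨b, hbK, hbL, fun x hxL hxK => ?_⟩
        by_cases hxJ : x ∈ J
        · exact hba.trans (ha x hxJ hxK)
        · exact hb x hxL hxJ

lemma dlexLT_wf [Fintype S] : WellFounded (dlexLT (S := S)) := by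
  letI : IsTrans (Finset S) dlexLT := ⟨fun _ _ _ => dlexLT_trans⟩
  letI : IsIrrefl (Finset S) dlexLT := ⟨dlexLT_irrefl⟩
  exact Finite.wellFounded_of_trans_of_irrefl _

end Dlex

section Main

variable {S : Type*} [Fintype S] [LinearOrder S] {R : Type*} [CommRing R]

lemma smul_mem_tsi {I : TwoSidedIdeal (ExteriorAlgebra R (S →₀ R))} (r : R)
    {x : ExteriorAlgebra R (S →₀ R)} (hx : x ∈ I) : r • x ∈ I := by
  rw [Algebra.smul_def]
  exact I.mul_mem_left _ _ hx

/-- If `bnd C` lies in a two-sided ideal and `C ⊆ J` is nonempty, then `bnd J` lies in it too. -/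
lemma bnd_mem_of_subset {I : TwoSidedIdeal (ExteriorAlgebra R (S →₀ R))} {C J : Finset S}
    (hC : C.Nonempty) (hCJ : C ⊆ J) (h : bnd R C ∈ I) : bnd R J ∈ I := by
  classical
  have heC : eMon R C = ιe R (C.min' hC) * bnd R C := (ιe_min_mul_bnd hC).symm
  set A : Finset S := J \ C with hA
  have hnd : ((A.sort (· ≤ ·)) ++ (C.sort (· ≤ ·))).Nodup := by
    rw [List.nodup_append']
    refine ⟨Finset.sort_nodup _ _, Finset.sort_nodup _ _, fun x hx hx2 => ?_⟩
    rw [Finset.mem_sort] at hx hx2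
    exact (Finset.mem_sdiff.mp hx).2 hx2
  obtain ⟨ε, hε, heq⟩ := xlp_nodup (R := R) hnd
  have htf : ((A.sort (· ≤ ·)) ++ (C.sort (· ≤ ·))).toFinset = J := by
    rw [List.toFinset_append, Finset.sort_toFinset, Finset.sort_toFinset,
      Finset.sdiff_union_of_subset hCJ]
  rw [htf] at heq
  have hεε : ε * ε = 1 := by rcases hε with rfl | rfl <;> simp
  have hprod : eMon R A * eMon R C = ε • eMon R J := by
    rw [eMon_eq_lp, eMon_eq_lp, ← lp_append]
    exact heq
  have hJe : eMon R J = ε • (eMon R A * eMon R C) := by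
    rw [hprod, smul_smul, hεε, one_smul]
  have : bnd R J = ε • (bnd R A * eMon R C
      + CliffordAlgebra.involute (eMon R A) * bnd R C) := by
    rw [← DD_eMon, hJe, map_smul, DD_leibniz, DD_eMon, DD_eMon]
  rw [this]
  refine smul_mem_tsi _ (I.add_mem ?_ ?_)
  · rw [heC, ← mul_assoc]
    exact I.mul_mem_left _ _ h
  · exact I.mul_mem_left _ _ h

lemma dep_nonempty {M : Matroid S} {J : Finset S} (h : M.Dep ↑J) : J.Nonempty := by
  rcases J.eq_empty_or_nonempty with rfl | h'
  · exact absurd (by simpa using M.empty_indep) (by simpa using (Matroid.dep_iff.mp h).1)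
  · exact h'

lemma bnd_mem_span (M : Matroid S) (hE : M.E = Set.univ)
    (hloop : ∀ C : Finset S, IsCircuit M C → 2 < C.card)
    (Mbar : Set (Finset S)) (hMbar : IsGroebnerCircuitSet M Mbar) (J : Finset S)
    (hJdep : M.Dep ↑J) :
    bnd R J ∈ TwoSidedIdeal.span {x : ExteriorAlgebra R (S →₀ R) |
        ∃ J : Finset S, IsCircuit M J ∧ J ∈ Mbar ∧ x = bnd R J} := by
  classical
  set I : TwoSidedIdeal (ExteriorAlgebra R (S →₀ R)) :=
    TwoSidedIdeal.span {x : ExteriorAlgebra R (S →₀ R) |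
      ∃ J : Finset S, IsCircuit M J ∧ J ∈ Mbar ∧ x = bnd R J} with hI
  revert hJdep
  refine dlexLT_wf.induction (C := fun J => M.Dep ↑J → bnd R J ∈ I) J ?_
  clear J
  intro J ih hJdep
  obtain ⟨C, hCJ, hCcirc⟩ := dep_contains_circuit hE hJdep
  by_cases hCJeq : C = J
  case neg =>
    have hlt : dlexLT C J := Or.inl (Finset.card_lt_card (ssubset_of_subset_of_ne hCJ hCJeq))
    exact bnd_mem_of_subset (dep_nonempty hCcirc.1) hCJ (ih C hlt hCcirc.1)
  case pos =>
    subst hCJeq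
    rename' hCcirc => hJcirc
    by_cases hJMbar : C ∈ Mbar
    · exact TwoSidedIdeal.subset_span ⟨C, hJcirc, hJMbar, rfl⟩
    · rename' C => J, hCJ => _hJJ
      -- extract a Gröbner witness K
      have hnot : ¬ (M.Dep ↑J ∧ ∀ K ∈ Mbar, dlexLT K J →
          ¬ convexIn (eraseMin K) (eraseMin J)) := fun hc => hJMbar ((hMbar J).mpr hc)
      push_neg at hnot
      obtain ⟨K, hKMbar, hKlt, hKconv⟩ := hnot hJdep
      have hKdep : M.Dep ↑K := ((hMbar K).mp hKMbar).1
      have hbK : bnd R K ∈ I := ih K hKlt hKdep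
      have hJne : J.Nonempty := dep_nonempty hJdep
      have hKne : K.Nonempty := dep_nonempty hKdep
      obtain ⟨C₀, hC₀K, hC₀circ⟩ := dep_contains_circuit hE hKdep
      set j₀ := J.min' hJne with hj₀
      set k₀ := K.min' hKne with hk₀
      set J' : Finset S := J.erase j₀ with hJ'
      set K' : Finset S := K.erase k₀ with hK'
      have hKJne : K ≠ J := fun h => hJMbar (h ▸ hKMbar)
      unfold eraseMin at hKconv
      rw [eraseMin_eq hKne, eraseMin_eq hJne] at hKconv
      have hK'J' : K' ⊆ J' := hKconv.1
      have hK'ne : K'.Nonempty := by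
        have h3 : 2 < C₀.card := hloop _ hC₀circ
        have : 2 < K.card := lt_of_lt_of_le h3 (Finset.card_le_card hC₀K)
        rw [hK']
        rw [← Finset.card_pos, Finset.card_erase_of_mem (K.min'_mem hKne)]
        omega
      set mK := K'.min' hK'ne with hmK
      set xK := K'.max' hK'ne with hxK
      have hmKK' : mK ∈ K' := K'.min'_mem hK'ne
      have hxKK' : xK ∈ K' := K'.max'_mem hK'ne
      have hk₀mK : k₀ < mK := by
        have h1 : k₀ ≤ mK := K.min'_le _ (Finset.mem_of_mem_erase hmKK')
        have h2 : k₀ ≠ mK := fun h => (Finset.mem_erase.mp hmKK').1 h.symm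
        exact lt_of_le_of_ne h1 h2
      set A₁ : Finset S := J'.filter (· < mK) with hA₁
      set A₂ : Finset S := J'.filter (fun x => xK < x) with hA₂
      have htri : ∀ x ∈ J', x ∈ A₁ ∨ x ∈ K' ∨ x ∈ A₂ := by
        intro x hx
        by_cases h1 : x < mK
        · exact Or.inl (Finset.mem_filter.mpr ⟨hx, h1⟩)
        by_cases h2 : xK < x
        · exact Or.inr (Or.inr (Finset.mem_filter.mpr ⟨hx, h2⟩))
        by_cases h3 : x ∈ K'
        · exact Or.inr (Or.inl h3)
        refine absurd (hKconv.2 x hx ⟨mK, hmKK', ?_⟩ ⟨xK, hxKK', ?_⟩) h3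
        · exact lt_of_le_of_ne (not_lt.mp h1) (fun h => h3 (h ▸ hmKK'))
        · exact lt_of_le_of_ne (not_lt.mp h2) (fun h => h3 (h ▸ hxKK'))
      have hj₀J : j₀ ∈ J := J.min'_mem hJne
      have hj₀nJ' : j₀ ∉ J' := Finset.notMem_erase _ _
      have hA₁J' : A₁ ⊆ J' := Finset.filter_subset _ _
      have hA₂J' : A₂ ⊆ J' := Finset.filter_subset _ _
      have hJ'J : J' ⊆ J := Finset.erase_subset _ _
      have hj₀lt : ∀ x ∈ J', j₀ < x := fun x hx =>
        lt_of_le_of_ne (J.min'_le _ (hJ'J hx)) (fun h => (Finset.mem_erase.mp hx).1 h.symm)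
      have hmKle : ∀ x ∈ K', mK ≤ x := fun x hx => K'.min'_le _ hx
      have hlexK : ∀ x ∈ K', x ≤ xK := fun x hx => K'.le_max' _ hx
      have hmKxK : mK ≤ xK := hlexK _ hmKK'
      have hA₁lt : ∀ x ∈ A₁, x < mK := fun x hx => (Finset.mem_filter.mp hx).2
      have hA₂gt : ∀ x ∈ A₂, xK < x := fun x hx => (Finset.mem_filter.mp hx).2
      have hKJ'sub : K' ⊆ K := Finset.erase_subset _ _
      have hk₀K : k₀ ∈ K := K.min'_mem hKne
      have hJsort : J.sort (· ≤ ·)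
          = j₀ :: ((A₁.sort (· ≤ ·)) ++ ((K'.sort (· ≤ ·)) ++ (A₂.sort (· ≤ ·)))) := by
        refine sort_eq_of_sorted ?_ ?_ ?_
        · rw [List.nodup_cons]
          constructor
          · intro hc
            rcases List.mem_append.mp hc with h | h
            · exact hj₀nJ' (hA₁J' ((Finset.mem_sort _).mp h))
            · rcases List.mem_append.mp h with h | h
              · exact hj₀nJ' (hK'J' ((Finset.mem_sort _).mp h))
              · exact hj₀nJ' (hA₂J' ((Finset.mem_sort _).mp h))
          · rw [List.nodup_append', List.nodup_append']
            refine ⟨Finset.sort_nodup _ _, ⟨Finset.sort_nodup _ _, Finset.sort_nodup _ _, ?_⟩, ?_⟩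
            · intro x hx hx2
              exact absurd (hA₂gt _ ((Finset.mem_sort _).mp hx2))
                (not_lt.mpr (hlexK _ ((Finset.mem_sort _).mp hx)))
            · intro x hx hx2
              have h1 := hA₁lt _ ((Finset.mem_sort _).mp hx)
              rcases List.mem_append.mp hx2 with h | h
              · exact absurd h1 (not_lt.mpr (hmKle _ ((Finset.mem_sort _).mp h)))
              · have h2 := hA₂gt _ ((Finset.mem_sort _).mp h)
                exact absurd (lt_of_lt_of_le h1 (hmKxK.trans h2.le)) (lt_irrefl x)
        · rw [List.pairwise_cons]
          constructor
          · intro b hb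
            have hbJ' : b ∈ J' := by
              rcases List.mem_append.mp hb with h | h
              · exact hA₁J' ((Finset.mem_sort _).mp h)
              · rcases List.mem_append.mp h with h | h
                · exact hK'J' ((Finset.mem_sort _).mp h)
                · exact hA₂J' ((Finset.mem_sort _).mp h)
            exact (hj₀lt _ hbJ').le
          · show List.Pairwise (· ≤ ·) _
            rw [List.pairwise_append, List.pairwise_append]
            refine ⟨Finset.pairwise_sort _ _, ⟨Finset.pairwise_sort _ _, Finset.pairwise_sort _ _, ?_⟩, ?_⟩
            · intro x hx y hy
              exact (hlexK _ ((Finset.mem_sort _).mp hx)).trans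
                (hA₂gt _ ((Finset.mem_sort _).mp hy)).le
            · intro x hx y hy
              have h1 := hA₁lt _ ((Finset.mem_sort _).mp hx)
              rcases List.mem_append.mp hy with h | h
              · exact h1.le.trans (hmKle _ ((Finset.mem_sort _).mp h))
              · exact h1.le.trans (hmKxK.trans (hA₂gt _ ((Finset.mem_sort _).mp h)).le)
        · simp only [List.toFinset_cons, List.toFinset_append, Finset.sort_toFinset]
          ext x
          simp only [Finset.mem_insert, Finset.mem_union]
          constructor
          · rintro (rfl | h | h | h)
            · exact hj₀J
            · exact hJ'J (hA₁J' h)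
            · exact hJ'J (hK'J' h)
            · exact hJ'J (hA₂J' h)
          · intro hx
            by_cases hxj : x = j₀
            · exact Or.inl hxj
            · rcases htri x (Finset.mem_erase.mpr ⟨hxj, hx⟩) with h | h | h
              · exact Or.inr (Or.inl h)
              · exact Or.inr (Or.inr (Or.inl h))
              · exact Or.inr (Or.inr (Or.inr h))
      -- the test element z
      have hzsum : xlp R (j₀ :: A₁.sort (· ≤ ·)) * (bnd R K * eMon R A₂)
          = ∑ k ∈ K, ((-1 : R) ^ (K.filter (· < k)).card) •
              xlp R ((j₀ :: A₁.sort (· ≤ ·)) ++ ((K.erase k).sort (· ≤ ·) ++ A₂.sort (· ≤ ·))) := by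
        simp only [bnd, Finset.sum_mul, Finset.mul_sum, smul_mul_assoc, mul_smul_comm,
          lp_append, eMon_eq_lp, mul_assoc]
      have hsgnk₀ : ((-1 : R) ^ (K.filter (· < k₀)).card) = 1 := by
        have h1 : (K.filter (· < k₀)).card = 0 := by
          rw [Finset.card_eq_zero, Finset.filter_eq_empty_iff]
          exact fun x hx => not_lt.mpr (K.min'_le _ hx)
        rw [h1, pow_zero]
      have hDz : DD R (xlp R (j₀ :: A₁.sort (· ≤ ·)) * (bnd R K * eMon R A₂))
          = bnd R J + ∑ k ∈ K.erase k₀, ((-1 : R) ^ (K.filter (· < k)).card) •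
              DD R (xlp R ((j₀ :: A₁.sort (· ≤ ·)) ++
                ((K.erase k).sort (· ≤ ·) ++ A₂.sort (· ≤ ·)))) := by
        rw [hzsum, map_sum]
        simp only [map_smul]
        rw [← Finset.add_sum_erase _ _ hk₀K, hsgnk₀, one_smul]
        congr 1
        have hlist : (j₀ :: A₁.sort (· ≤ ·)) ++
            ((K.erase k₀).sort (· ≤ ·) ++ A₂.sort (· ≤ ·)) = J.sort (· ≤ ·) := by
          rw [hJsort]
          rfl
        rw [hlist, ← eMon_eq_lp, DD_eMon]
      have hDzmem : DD R (xlp R (j₀ :: A₁.sort (· ≤ ·)) * (bnd R K * eMon R A₂)) ∈ I := by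
        rw [DD_leibniz, DD_leibniz (bnd R K) (eMon R A₂),
          show DD R (bnd R K) = 0 from by rw [← DD_eMon, DD_DD], zero_mul, zero_add,
          involute_bnd, smul_mul_assoc]
        exact I.add_mem (I.mul_mem_left _ _ (I.mul_mem_right _ _ hbK))
          (I.mul_mem_left _ _ (smul_mem_tsi _ (I.mul_mem_right _ _ hbK)))
      have hsummem : (∑ k ∈ K.erase k₀, ((-1 : R) ^ (K.filter (· < k)).card) •
          DD R (xlp R ((j₀ :: A₁.sort (· ≤ ·)) ++
            ((K.erase k).sort (· ≤ ·) ++ A₂.sort (· ≤ ·))))) ∈ I := by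
        refine Finset.sum_induction _ (· ∈ I) (fun a b ha hb => I.add_mem ha hb) I.zero_mem ?_
        intro k hk
        obtain ⟨hkk₀, hkK⟩ := Finset.mem_erase.mp hk
        have hkK' : k ∈ K' := Finset.mem_erase.mpr ⟨hkk₀, hkK⟩
        have hkJ' : k ∈ J' := hK'J' hkK'
        have hkJ : k ∈ J := hJ'J hkJ'
        by_cases hnd : ((j₀ :: A₁.sort (· ≤ ·)) ++
            ((K.erase k).sort (· ≤ ·) ++ A₂.sort (· ≤ ·))).Nodup
        · obtain ⟨ε, hε, heq⟩ := xlp_nodup (R := R) hnd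
          rw [heq, map_smul, DD_eMon]
          have hk₀k : k₀ ≠ k := fun h => hkk₀ h.symm
          have hk₀Kk : k₀ ∈ K.erase k := Finset.mem_erase.mpr ⟨hk₀k, hk₀K⟩
          have hdisj := (List.nodup_append'.mp hnd).2.2
          have hk₀left : k₀ ∉ (j₀ :: A₁.sort (· ≤ ·)) := fun hc =>
            hdisj hc (List.mem_append.mpr (Or.inl ((Finset.mem_sort _).mpr hk₀Kk)))
          have hk₀j₀ : k₀ ≠ j₀ := fun h => hk₀left (h ▸ List.mem_cons_self)
          have hk₀A₁ : k₀ ∉ A₁ := fun h =>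
            hk₀left (List.mem_cons_of_mem _ ((Finset.mem_sort _).mpr h))
          have hk₀J : k₀ ∉ J := by
            intro hc
            have hk₀J' : k₀ ∈ J' := Finset.mem_erase.mpr ⟨hk₀j₀, hc⟩
            rcases htri _ hk₀J' with h | h | h
            · exact hk₀A₁ h
            · exact (Finset.notMem_erase _ _) h
            · exact absurd (hA₂gt _ h) (not_lt.mpr (hk₀mK.le.trans hmKxK))
          have hLkF : ((j₀ :: A₁.sort (· ≤ ·)) ++
              ((K.erase k).sort (· ≤ ·) ++ A₂.sort (· ≤ ·))).toFinset
              = insert k₀ (J.erase k) := by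
            simp only [List.toFinset_append, List.toFinset_cons, Finset.sort_toFinset]
            ext x
            simp only [Finset.mem_insert, Finset.mem_union, Finset.mem_erase]
            constructor
            · rintro ((rfl | h) | ⟨hxk, hxK⟩ | h)
              · exact Or.inr ⟨fun h => (Finset.mem_erase.mp hkJ').1 h.symm, hj₀J⟩
              · refine Or.inr ⟨?_, hJ'J (hA₁J' h)⟩
                intro hxe
                exact absurd (hA₁lt _ h) (not_lt.mpr (hxe ▸ hmKle _ hkK'))
              · by_cases hxk₀ : x = k₀
                · exact Or.inl hxk₀
                · exact Or.inr ⟨hxk, hJ'J (hK'J' (Finset.mem_erase.mpr ⟨hxk₀, hxK⟩))⟩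
              · refine Or.inr ⟨?_, hJ'J (hA₂J' h)⟩
                intro hxe
                exact absurd (hA₂gt _ h) (not_lt.mpr (hxe ▸ (hlexK _ hkK')))
            · rintro (rfl | ⟨hxk, hxJ⟩)
              · exact Or.inr (Or.inl ⟨hk₀k, hk₀K⟩)
              · by_cases hxj : x = j₀
                · exact Or.inl (Or.inl hxj)
                · rcases htri x (Finset.mem_erase.mpr ⟨hxj, hxJ⟩) with h | h | h
                  · exact Or.inl (Or.inr h)
                  · exact Or.inr (Or.inl ⟨hxk, hKJ'sub h⟩)
                  · exact Or.inr (Or.inr h)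
          rw [hLkF]
          have hk₀nJk : k₀ ∉ J.erase k := fun h => hk₀J (Finset.mem_of_mem_erase h)
          have hJcard : 1 ≤ J.card := Finset.card_pos.mpr hJne
          have hdep : M.Dep ↑(insert k₀ (J.erase k)) := by
            by_cases hkC₀ : k ∈ C₀
            · have hC₀J : C₀ ≠ J := by
                intro h
                have hJK : J ⊆ K := h ▸ hC₀K
                rcases hKlt with hlt | ⟨hcc, _⟩
                · exact absurd (Finset.card_le_card hJK) (not_le.mpr hlt)
                · exact hKJne (Finset.eq_of_subset_of_card_le hJK hcc.le).symm
              have helim := circuit_elimination hE hC₀circ hJcirc hC₀J hkC₀ hkJ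
              refine helim.superset ?_ (subset_ground' hE _)
              refine Finset.coe_subset.mpr ?_
              intro x hx
              obtain ⟨hxk, hxU⟩ := Finset.mem_erase.mp hx
              rcases Finset.mem_union.mp hxU with h | h
              · by_cases hxk₀ : x = k₀
                · exact hxk₀ ▸ Finset.mem_insert_self _ _
                · exact Finset.mem_insert_of_mem (Finset.mem_erase.mpr
                    ⟨hxk, hJ'J (hK'J' (Finset.mem_erase.mpr ⟨hxk₀, hC₀K h⟩))⟩)
              · exact Finset.mem_insert_of_mem (Finset.mem_erase.mpr ⟨hxk, h⟩)
            · refine hC₀circ.1.superset ?_ (subset_ground' hE _)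
              refine Finset.coe_subset.mpr ?_
              intro x hx
              by_cases hxk₀ : x = k₀
              · exact hxk₀ ▸ Finset.mem_insert_self _ _
              · refine Finset.mem_insert_of_mem (Finset.mem_erase.mpr
                  ⟨fun h => hkC₀ (h ▸ hx), hJ'J (hK'J' (Finset.mem_erase.mpr ⟨hxk₀, hC₀K hx⟩))⟩)
          have hlex : dlexLT (insert k₀ (J.erase k)) J := by
            refine Or.inr ⟨?_, k₀, Finset.mem_insert_self _ _, hk₀J, ?_⟩
            · rw [Finset.card_insert_of_notMem hk₀nJk, Finset.card_erase_of_mem hkJ]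
              omega
            · intro x hxJ hxn
              have hxk : x = k := by
                by_contra hxk
                exact hxn (Finset.mem_insert_of_mem (Finset.mem_erase.mpr ⟨hxk, hxJ⟩))
              rw [hxk]
              exact hk₀mK.trans_le (hmKle k hkK')
          exact smul_mem_tsi _ (smul_mem_tsi _ (ih _ hlex hdep))
        · rw [lp_eq_zero_of_not_nodup hnd, map_zero, smul_zero]
          exact I.zero_mem
      have hfinal : bnd R J
          = DD R (xlp R (j₀ :: A₁.sort (· ≤ ·)) * (bnd R K * eMon R A₂))
            - ∑ k ∈ K.erase k₀, ((-1 : R) ^ (K.filter (· < k)).card) •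
              DD R (xlp R ((j₀ :: A₁.sort (· ≤ ·)) ++
                ((K.erase k).sort (· ≤ ·) ++ A₂.sort (· ≤ ·)))) := by
        rw [hDz]
        abel
      rw [hfinal]
      exact I.sub_mem hDzmem hsummem


end Main

theorem stmt17 {S : Type*} [Fintype S] [LinearOrder S] {R : Type*} [CommRing R]
    (M : Matroid S) (hE : M.E = Set.univ)
    (hloop : ∀ C : Finset S, IsCircuit M C → 2 < C.card)
    (Mbar : Set (Finset S)) (hMbar : IsGroebnerCircuitSet M Mbar) :
    TwoSidedIdeal.span {x : ExteriorAlgebra R (S →₀ R) |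
        ∃ J : Finset S, IsCircuit M J ∧ J ∈ Mbar ∧ x = bnd R J} =
      TwoSidedIdeal.span {x : ExteriorAlgebra R (S →₀ R) |
        ∃ J : Finset S, IsCircuit M J ∧ x = bnd R J} := by
  apply le_antisymm
  · intro x hx
    refine TwoSidedIdeal.mem_span_iff.mp hx _ ?_
    rintro y ⟨J, hJ, _, rfl⟩
    exact TwoSidedIdeal.subset_span ⟨J, hJ, rfl⟩
  · intro x hx
    refine TwoSidedIdeal.mem_span_iff.mp hx _ ?_
    rintro y ⟨J, hJ, rfl⟩
    exact bnd_mem_span M hE hloop Mbar hMbar J hJ.1
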